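/- Let T be a t-norm and let R be a fuzzy T-equivalence on a set U with a dually well-ordered spectrum. Then for any subset A ⊆ U, the fuzzy lower approximation of A equals the fuzzy lower approximation of A_E, i.e., μ_{[A]_R}(x) = μ_{[A_E]_R}(x) for all x ∈ U. -/
import Mathlib


open unitInterval

noncomputable section

instance : Fact ((0:ℝ) ≤ 1) := ⟨zero_le_one⟩

/-- A t-norm on the unit interval: commutative, associative, monotone in each
argument, with `1` as unit. -/
def IsTnorm (T : I → I → I) : Prop :=
  (∀ x y, T x y = T y x) ∧
  (∀ x y z, T (T x y) z = T x (T y z)) ∧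
  (∀ x₁ x₂ y, x₁ ≤ x₂ → T x₁ y ≤ T x₂ y) ∧
  (∀ x y₁ y₂, y₁ ≤ y₂ → T x y₁ ≤ T x y₂) ∧
  (∀ x, T x 1 = x)

/-- A fuzzy `T`-equivalence: reflexive, symmetric, `T`-transitive fuzzy relation. -/
def IsFuzzyTEquiv {U : Type*} (T : I → I → I) (μ : U → U → I) : Prop :=
  (∀ x, μ x x = 1) ∧ (∀ x y, μ x y = μ y x) ∧ (∀ x y z, T (μ x y) (μ y z) ≤ μ x z)

/-- Fuzzy upper approximation of a crisp set `A`: `sup {μ x y | y ∈ A}` (`sup ∅ = 0`). -/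
def upperApp {U : Type*} (μ : U → U → I) (A : Set U) (x : U) : I := sSup (μ x '' A)

/-- Fuzzy lower approximation of a crisp set `A`: `inf {1 - μ x y | y ∉ A}` (`inf ∅ = 1`). -/
def lowerApp {U : Type*} (μ : U → U → I) (A : Set U) (x : U) : I :=
  sInf ((fun y => σ (μ x y)) '' Aᶜ)

/-- The spectrum of a fuzzy relation. -/
def fuzzySpectrum {U : Type*} (μ : U → U → I) : Set I := {r | ∃ x y, μ x y = r}

/-- `R` has a dually well-ordered spectrum: every nonempty subset of the
spectrum has a greatest element. -/
def DuallyWellOrdered {U : Type*} (μ : U → U → I) : Prop :=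
  ∀ s ⊆ fuzzySpectrum μ, s.Nonempty → ∃ m ∈ s, ∀ r ∈ s, r ≤ m

/-- Upper approximation by the crisp equivalence `E = {(x,y) | μ x y = 1}`. -/
def upperE {U : Type*} (μ : U → U → I) (A : Set U) : Set U :=
  {x | ({y | μ x y = 1} ∩ A).Nonempty}

/-- Lower approximation by the crisp equivalence `E = {(x,y) | μ x y = 1}`. -/
def lowerE {U : Type*} (μ : U → U → I) (A : Set U) : Set U :=
  {x | {y | μ x y = 1} ⊆ A}

/-- Upper approximation by the support relation `S = {(x,y) | μ x y > 0}`. -/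
def upperS {U : Type*} (μ : U → U → I) (A : Set U) : Set U :=
  {x | ({y | 0 < μ x y} ∩ A).Nonempty}

/-- Lower approximation by the support relation `S = {(x,y) | μ x y > 0}`. -/
def lowerS {U : Type*} (μ : U → U → I) (A : Set U) : Set U :=
  {x | {y | 0 < μ x y} ⊆ A}

/-- `μ_[A]_R = μ_[A_E]_R`. -/
theorem stmt6 {U : Type*} (T : I → I → I) (μ : U → U → I)
    (hT : IsTnorm T) (hR : IsFuzzyTEquiv T μ) (hD : DuallyWellOrdered μ)
    (A : Set U) :
    ∀ x : U, lowerApp μ A x = lowerApp μ (lowerE μ A) x := by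
  obtain ⟨hTc, hTa, hTm1, hTm2, hTu⟩ := hT
  obtain ⟨hrefl, hsymm, htrans⟩ := hR
  intro x
  apply le_antisymm
  · -- lowerApp A ≤ lowerApp A_E
    apply le_sInf
    rintro b ⟨y, hy, rfl⟩
    simp only [Set.mem_compl_iff, lowerE, Set.mem_setOf_eq] at hy
    rw [Set.not_subset] at hy
    obtain ⟨z, hz1, hz2⟩ := hy
    simp only [Set.mem_setOf_eq] at hz1
    have hle : μ x y ≤ μ x z := by
      calc μ x y = T (μ x y) 1 := (hTu _).symm
        _ = T (μ x y) (μ y z) := by rw [hz1]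
        _ ≤ μ x z := htrans x y z
    have : σ (μ x z) ≤ σ (μ x y) := by
      simp only [unitInterval.symm_le_symm]; exact hle
    exact le_trans (sInf_le ⟨z, hz2, rfl⟩) this
  · -- lowerApp A_E ≤ lowerApp A
    apply sInf_le_sInf
    apply Set.image_mono
    intro y hy
    simp only [Set.mem_compl_iff, lowerE, Set.mem_setOf_eq] at *
    intro hsub
    exact hy (hsub (hrefl y))
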